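/- arXiv:1903.10686 — 3 statements merged into one kernel-verified Lean document; each statement's English description precedes it below -/
import Mathlib

section
/- The quaternionic exponential map restricts to a homeomorphism from the set {θ ∈ ℍ : Re θ = 0 and ‖θ‖ < π} of purely imaginary quaternions of norm less than π onto the set {q ∈ ℍ : ‖q‖ = 1 and q ≠ -1} of unit quaternions different from -1. In particular, for every unit quaternion q ≠ -1 there is a unique purely imaginary quaternion θ with ‖θ‖ < π and exp θ = q. -/
open Quaternion NormedSpace

noncomputable def qlogAux (q : Quaternion ℝ) : Quaternion ℝ :=
  (Real.arccos q.re / ‖q.im‖) • q.im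

lemma qlogAux_re (q : Quaternion ℝ) : (qlogAux q).re = 0 := by
  simp [qlogAux]

lemma norm_decomp (q : Quaternion ℝ) : ‖q‖ ^ 2 = q.re ^ 2 + ‖q.im‖ ^ 2 := by
  have h1 : ‖q‖ ^ 2 = normSq q := by rw [normSq_eq_norm_mul_self]; ring
  have h2 : ‖q.im‖ ^ 2 = normSq q.im := by rw [normSq_eq_norm_mul_self]; ring
  rw [h1, h2, normSq_def', normSq_def']
  simp
  ring_nf

lemma im_eq_self {a : Quaternion ℝ} (h : a.re = 0) : a.im = a := by ext <;> simp [h]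

lemma norm_qlogAux_le (q : Quaternion ℝ) : ‖qlogAux q‖ ≤ Real.arccos q.re := by
  rcases eq_or_ne q.im 0 with h | h
  · simp [qlogAux, h, Real.arccos_nonneg]
  · have hn : (0:ℝ) < ‖q.im‖ := norm_pos_iff.mpr h
    rw [qlogAux, norm_smul, Real.norm_eq_abs, abs_div,
      abs_of_nonneg (Real.arccos_nonneg _), abs_norm, div_mul_cancel₀ _ hn.ne']

/-- im = 0 on the unit sphere minus -1 forces q = 1 -/
lemma eq_one_of_im_eq_zero {q : Quaternion ℝ} (h1 : ‖q‖ = 1) (h2 : q ≠ -1)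
    (h : q.im = 0) : q = 1 := by
  have hq : q = (q.re : Quaternion ℝ) := by
    conv_lhs => rw [← re_add_im q]
    rw [h, add_zero]
  have : |q.re| = 1 := by
    rw [hq] at h1
    simpa [Quaternion.norm_coe] using h1
  rcases abs_eq (by norm_num : (0:ℝ) ≤ 1) |>.mp this with h' | h'
  · rw [hq, h']; norm_num
  · exfalso; apply h2; rw [hq, h']; push_cast; ring

lemma qlog_exp {θ : Quaternion ℝ} (h0 : θ.re = 0) (hπ : ‖θ‖ < Real.pi) :
    qlogAux (exp θ) = θ := by
  rcases eq_or_ne θ 0 with rfl | hθ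
  · simp [qlogAux, exp_zero]
  · set t := ‖θ‖ with ht
    have ht0 : 0 < t := norm_pos_iff.mpr hθ
    have hsin : 0 < Real.sin t := Real.sin_pos_of_pos_of_lt_pi ht0 hπ
    have hE : exp θ = ↑(Real.cos t) + (Real.sin t / t) • θ :=
      Quaternion.exp_of_re_eq_zero θ h0
    have hre : (exp θ).re = Real.cos t := by
      rw [hE]; simp [h0]
    have him : (exp θ).im = (Real.sin t / t) • θ := by
      rw [hE]; simp [im_eq_self h0]
    have hnorm : ‖(exp θ).im‖ = Real.sin t := by
      rw [him, norm_smul, Real.norm_eq_abs, abs_of_pos (div_pos hsin ht0), ← ht,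
        div_mul_cancel₀ _ ht0.ne']
    rw [qlogAux, hre, hnorm, him, Real.arccos_cos ht0.le hπ.le, smul_smul]
    rw [div_mul_div_comm, mul_comm, div_self (by positivity), one_smul]

lemma exp_qlog {q : Quaternion ℝ} (h1 : ‖q‖ = 1) (h2 : q ≠ -1) :
    exp (qlogAux q) = q := by
  rcases eq_or_ne q.im 0 with h | h
  · rw [eq_one_of_im_eq_zero h1 h2 h]
    simp [qlogAux, eq_one_of_im_eq_zero h1 h2 h ▸ h, exp_zero]
  · have hn : (0:ℝ) < ‖q.im‖ := norm_pos_iff.mpr h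
    have hd : q.re ^ 2 + ‖q.im‖ ^ 2 = 1 := by
      have := norm_decomp q; rw [h1] at this; linarith [this]
    have hre1 : q.re < 1 := by nlinarith
    have hrem1 : -1 < q.re := by nlinarith
    set t := Real.arccos q.re with ht
    have ht0 : 0 < t := Real.arccos_pos.mpr hre1
    have hsin : Real.sin t = ‖q.im‖ := by
      rw [ht, Real.sin_arccos]
      rw [show 1 - q.re ^ 2 = ‖q.im‖ ^ 2 by linarith, Real.sqrt_sq hn.le]
    have hθre : (qlogAux q).re = 0 := qlogAux_re q
    have hθnorm : ‖qlogAux q‖ = t := by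
      rw [qlogAux, norm_smul, Real.norm_eq_abs, abs_div, abs_of_nonneg (Real.arccos_nonneg _),
        abs_norm, div_mul_cancel₀ _ hn.ne']
    rw [Quaternion.exp_of_re_eq_zero _ hθre, hθnorm, Real.cos_arccos hrem1.le hre1.le,
      qlogAux, smul_smul, ← ht, hsin]
    rw [div_mul_div_comm, mul_comm t, div_self (by positivity), one_smul, re_add_im]

lemma norm_qlog_lt {q : Quaternion ℝ} (h1 : ‖q‖ = 1) (h2 : q ≠ -1) :
    ‖qlogAux q‖ < Real.pi := by
  rcases eq_or_ne q.im 0 with h | h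
  · rw [eq_one_of_im_eq_zero h1 h2 h]
    simp [qlogAux]
    exact Real.pi_pos
  · have hn : (0:ℝ) < ‖q.im‖ := norm_pos_iff.mpr h
    have hd : q.re ^ 2 + ‖q.im‖ ^ 2 = 1 := by
      have := norm_decomp q; rw [h1] at this; linarith [this]
    have hrem1 : -1 < q.re := by nlinarith
    calc ‖qlogAux q‖ ≤ Real.arccos q.re := norm_qlogAux_le q
      _ < Real.pi := lt_of_le_of_ne (Real.arccos_le_pi _)
        (fun hc => absurd (Real.arccos_eq_pi.mp hc) (by linarith))

lemma exp_mem {θ : Quaternion ℝ} (h0 : θ.re = 0) (hπ : ‖θ‖ < Real.pi) :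
    ‖exp θ‖ = 1 ∧ exp θ ≠ -1 := by
  constructor
  · rw [Quaternion.norm_exp, h0]; simp
  · intro hc
    have h1 := qlog_exp h0 hπ
    rw [hc] at h1
    have : qlogAux (-1) = 0 := by
      have : (-1 : Quaternion ℝ).im = 0 := by ext <;> simp
      simp [qlogAux, this]
    rw [this] at h1
    rw [← h1, exp_zero] at hc
    have := congrArg QuaternionAlgebra.re hc
    simp at this
    linarith

lemma qlog_continuousOn :
    Continuous fun q : {q : Quaternion ℝ // ‖q‖ = 1 ∧ q ≠ -1} => qlogAux (q : Quaternion ℝ) := by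
  rw [continuous_iff_continuousAt]
  intro x
  rcases eq_or_ne (x : Quaternion ℝ).im 0 with h | h
  · -- x = 1
    have hx1 : (x : Quaternion ℝ) = 1 := eq_one_of_im_eq_zero x.2.1 x.2.2 h
    have hval : qlogAux (x : Quaternion ℝ) = 0 := by
      simp [qlogAux, h]
    unfold ContinuousAt
    simp only [hval]
    apply squeeze_zero_norm
      (f := fun q : {q : Quaternion ℝ // ‖q‖ = 1 ∧ q ≠ -1} => qlogAux (q : Quaternion ℝ))
      (fun q => norm_qlogAux_le (q : Quaternion ℝ))
    have : Continuous fun q : {q : Quaternion ℝ // ‖q‖ = 1 ∧ q ≠ -1} =>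
        Real.arccos (q : Quaternion ℝ).re :=
      Real.continuous_arccos.comp (continuous_re.comp continuous_subtype_val)
    have h2 := this.continuousAt (x := x)
    unfold ContinuousAt at h2
    have h3 : (fun q : {q : Quaternion ℝ // ‖q‖ = 1 ∧ q ≠ -1} =>
        Real.arccos (q : Quaternion ℝ).re) x = 0 := by
      show Real.arccos (x : Quaternion ℝ).re = 0
      rw [hx1, show (1 : Quaternion ℝ).re = 1 by simp, Real.arccos_one]
    rwa [h3] at h2
  · have hn : ContinuousAt (fun q : Quaternion ℝ => qlogAux q) (x : Quaternion ℝ) := by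
      show ContinuousAt (fun q : Quaternion ℝ => (Real.arccos q.re / ‖q.im‖) • q.im) _
      refine ContinuousAt.smul (M := ℝ) ?_ continuous_im.continuousAt
      exact ((Real.continuous_arccos.comp continuous_re).continuousAt).div
        ((continuous_norm.comp continuous_im).continuousAt)
        (norm_ne_zero_iff.mpr h)
    exact hn.comp continuous_subtype_val.continuousAt

/-- The quaternionic exponential restricts to a homeomorphism from the set of purely
imaginary quaternions of norm less than `π` onto the set of unit quaternions different
from `-1`; in particular every unit quaternion `q ≠ -1` is `exp θ` for a unique purely
imaginary `θ` with `‖θ‖ < π`. -/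
theorem quaternion_exp_homeomorph :
    (∃ h : Homeomorph {θ : Quaternion ℝ // θ.re = 0 ∧ ‖θ‖ < Real.pi}
        {q : Quaternion ℝ // ‖q‖ = 1 ∧ q ≠ -1},
      ∀ θ : {θ : Quaternion ℝ // θ.re = 0 ∧ ‖θ‖ < Real.pi},
        (h θ : Quaternion ℝ) = NormedSpace.exp (θ : Quaternion ℝ)) ∧
    ∀ q : Quaternion ℝ, ‖q‖ = 1 → q ≠ -1 →
      ∃! θ : Quaternion ℝ, θ.re = 0 ∧ ‖θ‖ < Real.pi ∧ NormedSpace.exp θ = q := by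
  constructor
  · refine ⟨⟨⟨fun θ => ⟨exp (θ : Quaternion ℝ), exp_mem θ.2.1 θ.2.2⟩,
      fun q => ⟨qlogAux (q : Quaternion ℝ), qlogAux_re _, norm_qlog_lt q.2.1 q.2.2⟩,
      fun θ => Subtype.ext (qlog_exp θ.2.1 θ.2.2),
      fun q => Subtype.ext (exp_qlog q.2.1 q.2.2)⟩,
      ?_, ?_⟩, fun θ => rfl⟩
    · exact Continuous.subtype_mk ((continuous_iff_continuousAt.2 fun x => (exp_analytic (𝕂 := ℝ) x).continuousAt).comp
      continuous_subtype_val) _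
    · exact Continuous.subtype_mk qlog_continuousOn _
  · intro q h1 h2
    refine ⟨qlogAux q, ⟨qlogAux_re _, norm_qlog_lt h1 h2, exp_qlog h1 h2⟩, ?_⟩
    rintro θ ⟨hθ1, hθ2, rfl⟩
    exact (qlog_exp hθ1 hθ2).symm
end

section
/- Let G₀, G₁, G₂ be groups and f : G₀ → G₁, h : G₁ → G₂ group homomorphisms. Consider the action of G₁ on G₁ × G₂ given by g • (a, b) = (a g⁻¹, h(g) b). Then: (i) this action is free; (ii) the map (a, b) ↦ h(a) b descends to a bijection from the orbit space (G₁ × G₂)/G₁ onto G₂; (iii) this bijection intertwines the residual actions: the left action g₀ • (a, b) = (f(g₀) a, b) corresponds to c ↦ h(f(g₀)) c on G₂, and the right action (a, b) • g₂ = (a, b g₂) corresponds to c ↦ c g₂. In other words, the horizontal composition of the bimodules M_f and M_h in Lie_ℝ is the bimodule M_{h∘f}. -/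
/-- Horizontal composition of the bimodules `M_f` and `M_h` in `Lie_ℝ` is `M_{h∘f}`:
the `G₁`-action `g • (a, b) = (a g⁻¹, h(g) b)` on `G₁ × G₂` is free, the map
`(a, b) ↦ h(a) b` descends to a bijection from the orbit space onto `G₂`, and this
bijection intertwines the residual left `G₀`-action and right `G₂`-action. -/
theorem bimodule_composition_of_homomorphisms
    {G₀ G₁ G₂ : Type*} [Group G₀] [Group G₁] [Group G₂]
    (f : G₀ →* G₁) (h : G₁ →* G₂) :
    -- (i) freeness
    (∀ (g : G₁) (p : G₁ × G₂), (p.1 * g⁻¹, h g * p.2) = p → g = 1) ∧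
    -- (ii) `(a,b) ↦ h(a) b` is surjective and its fibers are exactly the orbits
    Function.Surjective (fun p : G₁ × G₂ => h p.1 * p.2) ∧
    (∀ p q : G₁ × G₂,
      h p.1 * p.2 = h q.1 * q.2 ↔ ∃ g : G₁, (p.1 * g⁻¹, h g * p.2) = q) ∧
    -- (iii) intertwining of the residual actions
    (∀ (g₀ : G₀) (p : G₁ × G₂),
      h (f g₀ * p.1) * p.2 = h (f g₀) * (h p.1 * p.2)) ∧
    (∀ (g₂ : G₂) (p : G₁ × G₂),
      h p.1 * (p.2 * g₂) = (h p.1 * p.2) * g₂) := by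
  refine ⟨?_, ?_, ?_, ?_, ?_⟩
  · intro g p hp
    have := congrArg Prod.fst hp
    simp at this
    exact this
  · intro c; exact ⟨(1, c), by simp⟩
  · intro p q
    constructor
    · intro hpq
      refine ⟨q.1⁻¹ * p.1, ?_⟩
      have : h q.1⁻¹ * (h p.1 * p.2) = q.2 := by
        rw [hpq]; simp [mul_assoc]
      ext <;> simp [mul_assoc, map_mul, ← this]
    · rintro ⟨g, rfl⟩
      simp [map_mul, mul_assoc]
  · intro g₀ p; simp [map_mul, mul_assoc]
  · intro g₂ p; simp [mul_assoc]
end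

section
/- Let G be a group and let G act on (G × G) × (G × G) by g • ((a, b), (c, d)) = ((a g⁻¹, b g⁻¹), (g c, d)). Then: (i) this action is free; (ii) the map ((a, b), (c, d)) ↦ (a c, b c, d) descends to a bijection from the orbit space onto G × G × G; (iii) under this bijection the four residual actions become: g • (a,b) = (g a, b) corresponds to left multiplication on the first coordinate, g • (a,b) = (a, g b) to left multiplication on the second coordinate, g • (c,d) = (c, g d) to left multiplication on the third coordinate, and g • (c,d) = (c g⁻¹, d g⁻¹) to simultaneous right multiplication by g⁻¹ on all three coordinates. Consequently both bracketings of the iterated pair-of-pants product yield the same model G × G × G with these four actions, so the product is associative. -/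
/-- Associativity of the pair-of-pants product: the gluing action of `G` on
`(G × G) × (G × G)` given by `g • ((a,b),(c,d)) = ((a g⁻¹, b g⁻¹), (g c, d))` is free,
the map `((a,b),(c,d)) ↦ (ac, bc, d)` descends to a bijection from the orbit space onto
`G × G × G`, and under this bijection the four residual actions are left multiplication
on each of the three coordinates and simultaneous right multiplication by `g⁻¹` on all
three; hence both bracketings of the iterated product yield the same model. -/
theorem pair_of_pants_associativity (G : Type*) [Group G] :
    -- (i) freeness
    (∀ (g : G) (p : (G × G) × (G × G)),
      (((p.1.1 * g⁻¹, p.1.2 * g⁻¹), (g * p.2.1, p.2.2)) : (G × G) × (G × G)) = p → g = 1) ∧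
    -- (ii) `((a,b),(c,d)) ↦ (ac, bc, d)` is surjective with fibers the orbits
    Function.Surjective (fun p : (G × G) × (G × G) =>
      ((p.1.1 * p.2.1, p.1.2 * p.2.1, p.2.2) : G × G × G)) ∧
    (∀ p q : (G × G) × (G × G),
      ((p.1.1 * p.2.1, p.1.2 * p.2.1, p.2.2) : G × G × G)
          = (q.1.1 * q.2.1, q.1.2 * q.2.1, q.2.2)
        ↔ ∃ g : G,
          (((p.1.1 * g⁻¹, p.1.2 * g⁻¹), (g * p.2.1, p.2.2)) : (G × G) × (G × G)) = q) ∧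
    -- (iii) the four residual actions
    (∀ (g : G) (p : (G × G) × (G × G)),
      (((g * p.1.1) * p.2.1, p.1.2 * p.2.1, p.2.2) : G × G × G)
        = (g * (p.1.1 * p.2.1), p.1.2 * p.2.1, p.2.2)) ∧
    (∀ (g : G) (p : (G × G) × (G × G)),
      ((p.1.1 * p.2.1, (g * p.1.2) * p.2.1, p.2.2) : G × G × G)
        = (p.1.1 * p.2.1, g * (p.1.2 * p.2.1), p.2.2)) ∧
    (∀ (g : G) (p : (G × G) × (G × G)),
      ((p.1.1 * p.2.1, p.1.2 * p.2.1, g * p.2.2) : G × G × G)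
        = (p.1.1 * p.2.1, p.1.2 * p.2.1, g * p.2.2)) ∧
    (∀ (g : G) (p : (G × G) × (G × G)),
      ((p.1.1 * (p.2.1 * g⁻¹), p.1.2 * (p.2.1 * g⁻¹), p.2.2 * g⁻¹) : G × G × G)
        = ((p.1.1 * p.2.1) * g⁻¹, (p.1.2 * p.2.1) * g⁻¹, p.2.2 * g⁻¹)) := by
  refine ⟨?_, ?_, ?_, ?_, ?_, ?_, ?_⟩
  · intro g p h
    have := congrArg (fun q => q.2.1) h
    simpa using this
  · intro ⟨x, y, z⟩
    exact ⟨((x, y), (1, z)), by simp⟩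
  · intro p q
    constructor
    · intro h
      have h1 : p.1.1 * p.2.1 = q.1.1 * q.2.1 := congrArg Prod.fst h
      have h2 : p.1.2 * p.2.1 = q.1.2 * q.2.1 := congrArg (fun x => x.2.1) h
      have h3 : p.2.2 = q.2.2 := congrArg (fun x => x.2.2) h
      refine ⟨q.2.1 * p.2.1⁻¹, ?_⟩
      have e1 : p.1.1 * (q.2.1 * p.2.1⁻¹)⁻¹ = q.1.1 := by
        rw [mul_inv_rev, inv_inv, ← mul_assoc, h1, mul_inv_cancel_right]
      have e2 : p.1.2 * (q.2.1 * p.2.1⁻¹)⁻¹ = q.1.2 := by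
        rw [mul_inv_rev, inv_inv, ← mul_assoc, h2, mul_inv_cancel_right]
      have e3 : (q.2.1 * p.2.1⁻¹) * p.2.1 = q.2.1 := by group
      exact Prod.ext (Prod.ext e1 e2) (Prod.ext e3 h3)
    · rintro ⟨g, rfl⟩
      simp [mul_assoc]
  · intro g p; simp [mul_assoc]
  · intro g p; simp [mul_assoc]
  · intro g p; simp
  · intro g p; simp [mul_assoc]
end
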